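/- Let f(x) = min(x, 1), a non-negative concave function on [0,∞). There exist 3×3 real positive semidefinite matrices B and Δ such that ‖f(B + Δ) − f(B)‖ > ‖f(Δ)‖, where ‖·‖ is the operator norm. In particular, the inequality ‖f(B + Δ) − f(B)‖ ≤ ‖f(Δ)‖ does not hold for all positive semidefinite B, Δ and all non-negative concave f on [0,∞). -/

import Mathlib

open Matrix
open scoped ComplexOrder

/-- The eigenvalues of a square matrix, sorted in non-increasing order
(junk value `0` if the matrix is not Hermitian). -/
noncomputable def eigValsDown {𝕜 : Type*} [RCLike 𝕜] {n : ℕ}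
    (A : Matrix (Fin n) (Fin n) 𝕜) : Fin n → ℝ :=
  if hA : A.IsHermitian then
    fun k => (hA.eigenvalues ∘ Tuple.sort hA.eigenvalues) k.rev
  else 0

/-- Functional calculus: apply a real function to a Hermitian matrix via its spectral
decomposition (junk value `0` if the matrix is not Hermitian). -/
noncomputable def matFun {𝕜 : Type*} [RCLike 𝕜] {n : ℕ} (h : ℝ → ℝ)
    (A : Matrix (Fin n) (Fin n) 𝕜) : Matrix (Fin n) (Fin n) 𝕜 :=
  if hA : A.IsHermitian then
    (hA.eigenvectorUnitary : Matrix (Fin n) (Fin n) 𝕜) *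
      Matrix.diagonal (fun i => (h (hA.eigenvalues i) : 𝕜)) *
      star (hA.eigenvectorUnitary : Matrix (Fin n) (Fin n) 𝕜)
  else 0

/-- The operator norm (largest singular value) of a matrix. -/
noncomputable def opNorm {𝕜 : Type*} [RCLike 𝕜] {n : ℕ}
    (A : Matrix (Fin n) (Fin n) 𝕜) : ℝ :=
  ‖Matrix.toEuclideanCLM (𝕜 := 𝕜) A‖

/-- The matrix absolute value `|M| = (Mᴴ M)^(1/2)`. -/
noncomputable def matAbs {𝕜 : Type*} [RCLike 𝕜] {n : ℕ}
    (A : Matrix (Fin n) (Fin n) 𝕜) : Matrix (Fin n) (Fin n) 𝕜 :=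
  ((Matrix.posSemidef_conjTranspose_mul_self A).1.eigenvectorUnitary : Matrix (Fin n) (Fin n) 𝕜) *
    Matrix.diagonal ((↑) ∘ (fun x : ℝ => Real.sqrt x) ∘
      (Matrix.posSemidef_conjTranspose_mul_self A).1.eigenvalues) *
    (star (Matrix.posSemidef_conjTranspose_mul_self A).1.eigenvectorUnitary : Matrix (Fin n) (Fin n) 𝕜)

/-- The Ky Fan `k`-norm: the sum of the `k` largest singular values. -/
noncomputable def kyFanNorm {𝕜 : Type*} [RCLike 𝕜] {n : ℕ} (k : ℕ)
    (A : Matrix (Fin n) (Fin n) 𝕜) : ℝ :=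
  ∑ j ∈ Finset.univ.filter (fun j : Fin n => (j : ℕ) < k), eigValsDown (matAbs A) j

lemma spec_real {n : ℕ} {A : Matrix (Fin n) (Fin n) ℝ} (hA : A.IsHermitian) :
    A = (hA.eigenvectorUnitary : Matrix (Fin n) (Fin n) ℝ) *
      Matrix.diagonal hA.eigenvalues * star (hA.eigenvectorUnitary : Matrix (Fin n) (Fin n) ℝ) := by
  have := hA.spectral_theorem
  simpa [RCLike.ofReal_real_eq_id, Function.comp] using this

lemma matFun_eq_quad {n : ℕ} {A : Matrix (Fin n) (Fin n) ℝ} (hA : A.IsHermitian)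
    (h : ℝ → ℝ) (c0 c1 c2 : ℝ)
    (hc : ∀ i, h (hA.eigenvalues i) = c0 + c1 * hA.eigenvalues i + c2 * hA.eigenvalues i ^ 2) :
    matFun h A = c0 • (1 : Matrix (Fin n) (Fin n) ℝ) + c1 • A + c2 • (A * A) := by
  have hU : (hA.eigenvectorUnitary : Matrix (Fin n) (Fin n) ℝ) *
      star (hA.eigenvectorUnitary : Matrix (Fin n) (Fin n) ℝ) = 1 :=
    Matrix.mem_unitaryGroup_iff.mp hA.eigenvectorUnitary.2
  have hUU : star (hA.eigenvectorUnitary : Matrix (Fin n) (Fin n) ℝ) *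
      (hA.eigenvectorUnitary : Matrix (Fin n) (Fin n) ℝ) = 1 :=
    Matrix.mem_unitaryGroup_iff'.mp hA.eigenvectorUnitary.2
  set U := (hA.eigenvectorUnitary : Matrix (Fin n) (Fin n) ℝ) with hUdef
  set lam := hA.eigenvalues with hlam
  have hspec : A = U * Matrix.diagonal lam * star U := spec_real hA
  have hdiag : (Matrix.diagonal (fun i => ((h (lam i) : ℝ))) : Matrix (Fin n) (Fin n) ℝ) =
      c0 • (1 : Matrix (Fin n) (Fin n) ℝ) + c1 • Matrix.diagonal lam +
        c2 • (Matrix.diagonal lam * Matrix.diagonal lam) := by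
    rw [Matrix.diagonal_mul_diagonal]
    ext i j
    rcases eq_or_ne i j with rfl | hij
    · simp [Matrix.diagonal_apply_eq, Matrix.one_apply_eq, hc i]
      left; ring
    · simp [Matrix.diagonal_apply_ne _ hij, Matrix.one_apply_ne hij]
  have hsq : (U * Matrix.diagonal lam * star U) * (U * Matrix.diagonal lam * star U)
      = U * (Matrix.diagonal lam * Matrix.diagonal lam) * star U := by
    calc (U * Matrix.diagonal lam * star U) * (U * Matrix.diagonal lam * star U)
        = U * Matrix.diagonal lam * (star U * U) * Matrix.diagonal lam * star U := by
          simp only [Matrix.mul_assoc]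
      _ = U * (Matrix.diagonal lam * Matrix.diagonal lam) * star U := by
          rw [hUU, Matrix.mul_one]; simp only [Matrix.mul_assoc]
  rw [matFun, dif_pos hA]
  calc U * Matrix.diagonal (fun i => ((h (lam i) : ℝ))) * star U
      = U * (c0 • (1 : Matrix (Fin n) (Fin n) ℝ) + c1 • Matrix.diagonal lam +
          c2 • (Matrix.diagonal lam * Matrix.diagonal lam)) * star U := by rw [hdiag]
    _ = c0 • (U * 1 * star U) + c1 • (U * Matrix.diagonal lam * star U)
        + c2 • (U * (Matrix.diagonal lam * Matrix.diagonal lam) * star U) := by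
        simp only [Matrix.mul_add, Matrix.add_mul, Matrix.mul_smul, Matrix.smul_mul]
    _ = c0 • (1 : Matrix (Fin n) (Fin n) ℝ) + c1 • A + c2 • (A * A) := by
        rw [Matrix.mul_one, hU, ← hsq, ← hspec]

lemma det_sub_smul_one {n : ℕ} {A : Matrix (Fin n) (Fin n) ℝ} (hA : A.IsHermitian) (c : ℝ) :
    (A - c • (1 : Matrix (Fin n) (Fin n) ℝ)).det = ∏ i, (hA.eigenvalues i - c) := by
  have hU : (hA.eigenvectorUnitary : Matrix (Fin n) (Fin n) ℝ) *
      star (hA.eigenvectorUnitary : Matrix (Fin n) (Fin n) ℝ) = 1 :=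
    Matrix.mem_unitaryGroup_iff.mp hA.eigenvectorUnitary.2
  set U := (hA.eigenvectorUnitary : Matrix (Fin n) (Fin n) ℝ) with hUdef
  set lam := hA.eigenvalues with hlam
  have hspec : A = U * Matrix.diagonal lam * star U := spec_real hA
  have key : A - c • (1 : Matrix (Fin n) (Fin n) ℝ)
      = U * Matrix.diagonal (fun i => lam i - c) * star U := by
    have h1 : (Matrix.diagonal (fun i => lam i - c) : Matrix (Fin n) (Fin n) ℝ)
        = Matrix.diagonal lam - c • (1 : Matrix (Fin n) (Fin n) ℝ) := by
      ext i j
      rcases eq_or_ne i j with rfl | hij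
      · simp [Matrix.diagonal_apply_eq, Matrix.one_apply_eq]
      · simp [Matrix.diagonal_apply_ne _ hij, Matrix.one_apply_ne hij]
    rw [h1, Matrix.mul_sub, Matrix.sub_mul, Matrix.mul_smul, Matrix.smul_mul, Matrix.mul_one,
      hU, ← hspec]
  have hUdet : U.det * (star U).det = 1 := by rw [← Matrix.det_mul, hU, Matrix.det_one]
  rw [key, Matrix.det_mul, Matrix.det_mul]
  rw [show (U.det * (Matrix.diagonal (fun i => lam i - c)).det) * (star U).det
      = (Matrix.diagonal (fun i => lam i - c)).det * (U.det * (star U).det) by ring]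
  rw [hUdet, mul_one, Matrix.det_diagonal]

noncomputable def Bmat : Matrix (Fin 3) (Fin 3) ℝ := !![5973/5000, 0, 0; 0, 1/2000, 0; 0, 0, 4099/5000]
noncomputable def Dmat : Matrix (Fin 3) (Fin 3) ℝ := !![1884601195367533/19703371939690000, 826770453616107/9851685969845000, (-828703101303189/9851685969845000); 826770453616107/9851685969845000, 3889894415388663/19703371939690000, 234190963121451/4925842984922500; (-828703101303189/9851685969845000), 234190963121451/4925842984922500, 390774136040747/1970337193969000]
noncomputable def Smat : Matrix (Fin 3) (Fin 3) ℝ := !![25422249314521207/19703371939690000, 826770453616107/9851685969845000, (-828703101303189/9851685969845000); 826770453616107/9851685969845000, 974936525339627/4925842984922500, 234190963121451/4925842984922500; (-828703101303189/9851685969845000), 234190963121451/4925842984922500, 5015141419141333/4925842984922500]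
noncomputable def Mmat : Matrix (Fin 3) (Fin 3) ℝ := !![(-1548568854/292856301125), 19086329178/292856301125, (-1250035227/292856301125); 19086329178/292856301125, 183898170651/937140163600, 15406860189/292856301125; (-1250035227/292856301125), 15406860189/292856301125, 2070546097969/11714252045000]

lemma hermB : Bmat.IsHermitian := by
  ext i j
  fin_cases i <;> fin_cases j <;> simp [Bmat, Matrix.conjTranspose_apply, Matrix.vecHead, Matrix.vecTail]

lemma hermD : Dmat.IsHermitian := by
  ext i j
  fin_cases i <;> fin_cases j <;> simp [Dmat, Matrix.conjTranspose_apply]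

lemma hermS : Smat.IsHermitian := by
  ext i j
  fin_cases i <;> fin_cases j <;> simp [Smat, Matrix.conjTranspose_apply]

lemma hSsum : Bmat + Dmat = Smat := by
  ext i j
  fin_cases i <;> fin_cases j <;> norm_num [Bmat, Dmat, Smat]

lemma psdB : Bmat.PosSemidef := by
  refine Matrix.PosSemidef.of_dotProduct_mulVec_nonneg hermB (fun x => ?_)
  simp only [Bmat, dotProduct, Matrix.mulVec, Fin.sum_univ_three, Pi.star_apply,
    star_trivial, Matrix.of_apply, Matrix.cons_val', Matrix.cons_val_zero, Matrix.cons_val_one,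
    Matrix.head_cons, Matrix.empty_val', Matrix.cons_val_fin_one, Matrix.head_fin_const,
    Matrix.cons_val_two, Matrix.tail_cons, Matrix.vecHead, Matrix.vecTail, Function.comp, Matrix.cons_val_succ]
  nlinarith [sq_nonneg (x 0), sq_nonneg (x 1), sq_nonneg (x 2)]

lemma psdD : Dmat.PosSemidef := by
  refine Matrix.PosSemidef.of_dotProduct_mulVec_nonneg hermD (fun x => ?_)
  simp only [Dmat, dotProduct, Matrix.mulVec, Fin.sum_univ_three, Pi.star_apply,
    star_trivial, Matrix.of_apply, Matrix.cons_val', Matrix.cons_val_zero, Matrix.cons_val_one,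
    Matrix.head_cons, Matrix.empty_val', Matrix.cons_val_fin_one, Matrix.head_fin_const,
    Matrix.cons_val_two, Matrix.tail_cons, Matrix.vecHead, Matrix.vecTail, Function.comp, Matrix.cons_val_succ]
  nlinarith [sq_nonneg (x 0 + (1653540907232214/1884601195367533 : ℝ) * x 1 - (1657406202606378/1884601195367533 : ℝ) * x 2),
    sq_nonneg (x 1 + (762308645422780232/777650672733355069 : ℝ) * x 2), sq_nonneg (x 2)]

lemma detD (x : ℝ) : (Dmat - x • (1 : Matrix (Fin 3) (Fin 3) ℝ)).det
    = -((x-1)^3 + (12543/5000 : ℝ)*(x-1)^2 + (409402300773375452987/197033719396900000000 : ℝ)*(x-1)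
        + (560723199202779145129293/985168596984500000000000 : ℝ)) := by
  rw [Matrix.det_fin_three]
  simp only [Dmat, Matrix.sub_apply, Matrix.smul_apply, Matrix.one_fin_three, smul_eq_mul,
    Matrix.of_apply, Matrix.cons_val', Matrix.cons_val_zero, Matrix.cons_val_one,
    Matrix.head_cons, Matrix.empty_val', Matrix.cons_val_fin_one, Matrix.head_fin_const,
    Matrix.cons_val_two, Matrix.tail_cons, Matrix.vecHead, Matrix.vecTail, Function.comp,
    Matrix.cons_val_succ]
  norm_num [Fin.reduceEq]
  ring

lemma detS (x : ℝ) : (Smat - x • (1 : Matrix (Fin 3) (Fin 3) ℝ)).det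
    = (47/250 - x) * ((1 - x) * (13183/10000 - x)) := by
  rw [Matrix.det_fin_three]
  simp only [Smat, Matrix.sub_apply, Matrix.smul_apply, Matrix.one_fin_three, smul_eq_mul,
    Matrix.of_apply, Matrix.cons_val', Matrix.cons_val_zero, Matrix.cons_val_one,
    Matrix.head_cons, Matrix.empty_val', Matrix.cons_val_fin_one, Matrix.head_fin_const,
    Matrix.cons_val_two, Matrix.tail_cons, Matrix.vecHead, Matrix.vecTail, Function.comp,
    Matrix.cons_val_succ]
  norm_num
  ring

lemma detB (x : ℝ) : (Bmat - x • (1 : Matrix (Fin 3) (Fin 3) ℝ)).det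
    = (5973/5000 - x) * ((1/2000 - x) * (4099/5000 - x)) := by
  rw [Matrix.det_fin_three]
  simp only [Bmat, Matrix.sub_apply, Matrix.smul_apply, Matrix.one_fin_three, smul_eq_mul,
    Matrix.of_apply, Matrix.cons_val', Matrix.cons_val_zero, Matrix.cons_val_one,
    Matrix.head_cons, Matrix.empty_val', Matrix.cons_val_fin_one, Matrix.head_fin_const,
    Matrix.cons_val_two, Matrix.tail_cons, Matrix.vecHead, Matrix.vecTail, Function.comp,
    Matrix.cons_val_succ]
  norm_num
  ring

lemma det_eig_zero {A : Matrix (Fin 3) (Fin 3) ℝ} (hA : A.IsHermitian) (i : Fin 3) :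
    (A - hA.eigenvalues i • (1 : Matrix (Fin 3) (Fin 3) ℝ)).det = 0 := by
  rw [det_sub_smul_one hA]
  exact Finset.prod_eq_zero (Finset.mem_univ i) (by simp)

lemma eigD_le_one (i : Fin 3) : hermD.eigenvalues i ≤ 1 := by
  by_contra hx
  push_neg at hx
  have h0 := det_eig_zero hermD i
  rw [detD (hermD.eigenvalues i)] at h0
  set x := hermD.eigenvalues i
  have hy : (0:ℝ) < x - 1 := by linarith
  nlinarith [pow_pos hy 3, pow_pos hy 2, hy]

lemma eigS_mem (i : Fin 3) : hermS.eigenvalues i = 47/250 ∨ hermS.eigenvalues i = 1 ∨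
    hermS.eigenvalues i = 13183/10000 := by
  have h0 := det_eig_zero hermS i
  rw [detS (hermS.eigenvalues i)] at h0
  set x := hermS.eigenvalues i
  rcases mul_eq_zero.mp h0 with h | h
  · left; linarith
  · rcases mul_eq_zero.mp h with h | h
    · right; left; linarith
    · right; right; linarith

lemma eigB_mem (i : Fin 3) : hermB.eigenvalues i = 5973/5000 ∨ hermB.eigenvalues i = 1/2000 ∨
    hermB.eigenvalues i = 4099/5000 := by
  have h0 := det_eig_zero hermB i
  rw [detB (hermB.eigenvalues i)] at h0
  set x := hermB.eigenvalues i
  rcases mul_eq_zero.mp h0 with h | h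
  · left; linarith
  · rcases mul_eq_zero.mp h with h | h
    · right; left; linarith
    · right; right; linarith

lemma matFun_D : matFun (fun x => min x 1) Dmat = Dmat := by
  have h := matFun_eq_quad hermD (fun x => min x 1) 0 1 0 (fun i => by
    rw [min_eq_left (eigD_le_one i)]; ring)
  simpa using h

lemma matFun_B : matFun (fun x => min x 1) Bmat
    = (-3988327/22377434000 : ℝ) • (1 : Matrix (Fin 3) (Fin 3) ℝ)
      + (30358953/22377434 : ℝ) • Bmat + (-4865000/11188717 : ℝ) • (Bmat * Bmat) := by
  apply matFun_eq_quad hermB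
  intro i
  rcases eigB_mem i with h | h | h <;> rw [h] <;> norm_num [min_def]

lemma matFun_S : matFun (fun x => min x 1) Smat
    = (-1880/11303 : ℝ) • (1 : Matrix (Fin 3) (Fin 3) ℝ)
      + (23183/11303 : ℝ) • Smat + (-10000/11303 : ℝ) • (Smat * Smat) := by
  apply matFun_eq_quad hermS
  intro i
  rcases eigS_mem i with h | h | h <;> rw [h] <;> norm_num [min_def]

lemma euclid_norm (w : Fin 3 → ℝ) : ‖(WithLp.equiv 2 (Fin 3 → ℝ)).symm w‖
    = Real.sqrt (w 0^2 + w 1^2 + w 2^2) := by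
  rw [EuclideanSpace.norm_eq]
  norm_num [Fin.sum_univ_three, sq_abs, Real.norm_eq_abs]

lemma opNorm_D_le : ‖Matrix.toEuclideanCLM (𝕜 := ℝ) Dmat‖ ≤ 247/1000 := by
  refine ContinuousLinearMap.opNorm_le_bound _ (by norm_num) (fun y => ?_)
  obtain ⟨x, rfl⟩ : ∃ x : Fin 3 → ℝ, (WithLp.equiv 2 (Fin 3 → ℝ)).symm x = y :=
    ⟨WithLp.equiv 2 (Fin 3 → ℝ) y, rfl⟩
  rw [WithLp.equiv_symm_apply, Matrix.toEuclideanCLM_toLp, ← WithLp.equiv_symm_apply, euclid_norm, euclid_norm]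
  rw [show (247/1000 : ℝ) * Real.sqrt (x 0^2 + x 1^2 + x 2^2)
      = Real.sqrt ((247/1000)^2 * (x 0^2 + x 1^2 + x 2^2)) by
    rw [Real.sqrt_mul (by positivity), Real.sqrt_sq (by norm_num)]]
  apply Real.sqrt_le_sqrt
  simp only [Matrix.toLin'_apply, Dmat, Matrix.mulVec, dotProduct, Fin.sum_univ_three,
    Matrix.of_apply, Matrix.cons_val', Matrix.cons_val_zero, Matrix.cons_val_one,
    Matrix.head_cons, Matrix.empty_val', Matrix.cons_val_fin_one, Matrix.head_fin_const,
    Matrix.cons_val_two, Matrix.tail_cons, Matrix.vecHead, Matrix.vecTail, Function.comp,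
    Matrix.cons_val_succ]
  nlinarith [sq_nonneg (x 0 - (450896679907549792/826264342872171211 : ℝ) * x 1
      + (6219556104704166/11318689628385907 : ℝ) * x 2),
    sq_nonneg (x 1 - (10203773854661440434017816139671808/34671734006971280750836125598419955 : ℝ) * x 2),
    sq_nonneg (x 2)]

lemma opNorm_M_gt : (247/1000 : ℝ) < ‖Matrix.toEuclideanCLM (𝕜 := ℝ) Mmat‖ := by
  have hle := (Matrix.toEuclideanCLM (𝕜 := ℝ) Mmat).le_opNorm
    ((WithLp.equiv 2 (Fin 3 → ℝ)).symm ![39/200, 4/5, 567/1000])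
  rw [WithLp.equiv_symm_apply, Matrix.toEuclideanCLM_toLp, ← WithLp.equiv_symm_apply, euclid_norm, euclid_norm] at hle
  set N := ‖Matrix.toEuclideanCLM (𝕜 := ℝ) Mmat‖ with hN
  simp only [Matrix.toLin'_apply, Mmat, Matrix.mulVec, dotProduct, Fin.sum_univ_three,
    Matrix.of_apply, Matrix.cons_val', Matrix.cons_val_zero, Matrix.cons_val_one,
    Matrix.head_cons, Matrix.empty_val', Matrix.cons_val_fin_one, Matrix.head_fin_const,
    Matrix.cons_val_two, Matrix.tail_cons, Matrix.vecHead, Matrix.vecTail, Function.comp,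
    Matrix.cons_val_succ] at hle
  norm_num at hle
  rw [show (242015000000:ℝ) = Real.sqrt 58571260225000000000000 by
    rw [show (58571260225000000000000:ℝ) = 242015000000^2 by norm_num, Real.sqrt_sq (by norm_num)]] at hle
  rw [← Real.sqrt_div (by norm_num : (0:ℝ) ≤ 3642874508287985833881) (58571260225000000000000:ℝ),
    ← Real.sqrt_div (by norm_num : (0:ℝ) ≤ 499757) (500000:ℝ)] at hle
  have h1 : (247/1000 : ℝ) * Real.sqrt (499757/500000)
      < Real.sqrt (3642874508287985833881/58571260225000000000000) := by
    rw [show (247/1000 : ℝ) * Real.sqrt (499757/500000)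
        = Real.sqrt ((247/1000)^2 * (499757/500000)) by
      rw [Real.sqrt_mul (by positivity), Real.sqrt_sq (by norm_num)]]
    exact Real.sqrt_lt_sqrt (by positivity) (by norm_num)
  have h2 : (0:ℝ) < Real.sqrt (499757/500000) := by positivity
  exact lt_of_mul_lt_mul_right (lt_of_lt_of_le h1 hle) (le_of_lt h2)

noncomputable def SSmat : Matrix (Fin 3) (Fin 3) ℝ := !![330792087291966819241/197033719396900000000, 11909768750750068821/98516859698450000000, (-18736519453046757747/98516859698450000000); 11909768750750068821/98516859698450000000, 2387883627213728401/49258429849225000000, 2500151379196987593/49258429849225000000; (-18736519453046757747/98516859698450000000), 2500151379196987593/49258429849225000000, 51520473036599157649/49258429849225000000]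
noncomputable def BBmat : Matrix (Fin 3) (Fin 3) ℝ := !![35676729/25000000, 0, 0; 0, 1/4000000, 0; 0, 0, 16801801/25000000]

set_option maxHeartbeats 1000000 in
lemma hSS : Smat * Smat = SSmat := by
  ext i j
  fin_cases i <;> fin_cases j <;>
    norm_num [Smat, SSmat, Matrix.mul_apply, Fin.sum_univ_three,
      Matrix.of_apply, Matrix.cons_val', Matrix.cons_val_zero, Matrix.cons_val_one,
      Matrix.head_cons, Matrix.empty_val', Matrix.cons_val_fin_one, Matrix.head_fin_const,
      Matrix.cons_val_two, Matrix.tail_cons, Matrix.vecHead, Matrix.vecTail, Function.comp,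
      Matrix.cons_val_succ]

set_option maxHeartbeats 1000000 in
lemma hBB : Bmat * Bmat = BBmat := by
  ext i j
  fin_cases i <;> fin_cases j <;>
    norm_num [Bmat, BBmat, Matrix.mul_apply, Fin.sum_univ_three,
      Matrix.of_apply, Matrix.cons_val', Matrix.cons_val_zero, Matrix.cons_val_one,
      Matrix.head_cons, Matrix.empty_val', Matrix.cons_val_fin_one, Matrix.head_fin_const,
      Matrix.cons_val_two, Matrix.tail_cons, Matrix.vecHead, Matrix.vecTail, Function.comp,
      Matrix.cons_val_succ]

set_option maxHeartbeats 1000000 in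
lemma hMcomb :
    ((-1880/11303 : ℝ) • (1 : Matrix (Fin 3) (Fin 3) ℝ)
        + (23183/11303 : ℝ) • Smat + (-10000/11303 : ℝ) • (Smat * Smat))
      - ((-3988327/22377434000 : ℝ) • (1 : Matrix (Fin 3) (Fin 3) ℝ)
        + (30358953/22377434 : ℝ) • Bmat + (-4865000/11188717 : ℝ) • (Bmat * Bmat)) = Mmat := by
  rw [hSS, hBB]
  ext i j
  fin_cases i <;> fin_cases j <;>
    norm_num [Smat, Bmat, Mmat, SSmat, BBmat, Fin.sum_univ_three, Matrix.smul_apply,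
      Matrix.sub_apply, Matrix.add_apply, Matrix.one_fin_three,
      Matrix.of_apply, Matrix.cons_val', Matrix.cons_val_zero, Matrix.cons_val_one,
      Matrix.head_cons, Matrix.empty_val', Matrix.cons_val_fin_one, Matrix.head_fin_const,
      Matrix.cons_val_two, Matrix.tail_cons, Matrix.vecHead, Matrix.vecTail, Function.comp,
      Matrix.cons_val_succ]

/-- with `f(x) = min(x, 1)`, there exist `3×3` real PSD matrices `B`, `Δ`
with `‖f(B + Δ) - f(B)‖ > ‖f(Δ)‖` in operator norm. -/
theorem stmt4 :
    ∃ B Δ : Matrix (Fin 3) (Fin 3) ℝ, B.PosSemidef ∧ Δ.PosSemidef ∧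
      opNorm (matFun (fun x => min x 1) Δ) <
        opNorm (matFun (fun x => min x 1) (B + Δ) - matFun (fun x => min x 1) B) := by
  refine ⟨Bmat, Dmat, psdB, psdD, ?_⟩
  rw [hSsum, matFun_D, matFun_B, matFun_S, hMcomb, opNorm, opNorm]
  exact lt_of_le_of_lt opNorm_D_le opNorm_M_gt
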